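/- Two partial expressions e and e' are n-extensionally equivalent if and only if their n-extensional semantics coincide, i.e. e ∼_n e' ⇔ ⟦e⟧_{ext_n} = ⟦e'⟧_{ext_n}. -/

import Mathlib

/-- A signature: function symbols and constructor symbols, each with an arity. -/
structure Sig where
  FS : Type
  CS : Type
  arityF : FS → ℕ
  arityC : CS → ℕ

/-- Applicative partial expressions over a signature.  Variables are natural
numbers and `bot` is the distinguished 0-ary constructor `⊥`. -/
inductive Exp (σ : Sig) : Type where
  | var : ℕ → Exp σ
  | fn : σ.FS → Exp σ
  | cn : σ.CS → Exp σ
  | bot : Exp σ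
  | app : Exp σ → Exp σ → Exp σ

variable {σ : Sig}

/-- `applyList e [e1, …, en]` is the curried application `e e1 … en`. -/
def applyList (e : Exp σ) (es : List (Exp σ)) : Exp σ := es.foldl Exp.app e

/-- Partial patterns `Pat_⊥`. -/
inductive IsPPat : Exp σ → Prop where
  | var (x : ℕ) : IsPPat (Exp.var x)
  | bot : IsPPat (Exp.bot : Exp σ)
  | capp (c : σ.CS) (ts : List (Exp σ)) (har : ts.length ≤ σ.arityC c)
      (hts : ∀ t ∈ ts, IsPPat t) : IsPPat (applyList (Exp.cn c) ts)
  | fapp (f : σ.FS) (ts : List (Exp σ)) (har : ts.length < σ.arityF f)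
      (hts : ∀ t ∈ ts, IsPPat t) : IsPPat (applyList (Exp.fn f) ts)

/-- The constructor `⊥` does not occur in the expression. -/
def BotFree : Exp σ → Prop
  | .bot => False
  | .app a b => BotFree a ∧ BotFree b
  | _ => True

/-- Total patterns `Pat`. -/
def IsPat (t : Exp σ) : Prop := IsPPat t ∧ BotFree t

/-- First-order patterns `FOPat`. -/
inductive IsFOPat : Exp σ → Prop where
  | var (x : ℕ) : IsFOPat (Exp.var x)
  | capp (c : σ.CS) (ts : List (Exp σ)) (har : ts.length = σ.arityC c)
      (hts : ∀ t ∈ ts, IsFOPat t) : IsFOPat (applyList (Exp.cn c) ts)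

/-- The list of occurrences of variables in an expression. -/
def occVars : Exp σ → List ℕ
  | .var x => [x]
  | .app a b => occVars a ++ occVars b
  | _ => []

/-- Applying a substitution to an expression. -/
def subst (θ : ℕ → Exp σ) : Exp σ → Exp σ
  | .var x => θ x
  | .fn f => .fn f
  | .cn c => .cn c
  | .bot => .bot
  | .app a b => .app (subst θ a) (subst θ b)

/-- Partial-pattern substitutions `PSubst_⊥`. -/
def PSub (θ : ℕ → Exp σ) : Prop := ∀ x, IsPPat (θ x)

/-- A program rule `f t1 … tn → r` (the left-hand side is `f` applied to `lhs`). -/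
structure Rule (σ : Sig) where
  fn : σ.FS
  lhs : List (Exp σ)
  rhs : Exp σ

/-- Well-formedness of a rule: `f` is applied to as many arguments as its arity,
the arguments form a linear tuple of total patterns. -/
def Rule.WF (r : Rule σ) : Prop :=
  r.lhs.length = σ.arityF r.fn ∧ (∀ t ∈ r.lhs, IsPat t) ∧
    (r.lhs.flatMap occVars).Nodup

/-- The rule has no extra variables: all variables of the right-hand side occur
in the left-hand side. -/
def Rule.NoExtra (r : Rule σ) : Prop :=
  ∀ x ∈ occVars r.rhs, x ∈ r.lhs.flatMap occVars

abbrev Program (σ : Sig) := Set (Rule σ)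

/-- A program without extra variables, all whose rules are well formed. -/
def WFProg (P : Program σ) : Prop := ∀ r ∈ P, r.WF ∧ r.NoExtra

/-- `h ∈ Σ` (a function symbol, a constructor symbol, or `⊥`). -/
def IsSymb : Exp σ → Prop
  | .fn _ => True
  | .cn _ => True
  | .bot => True
  | _ => False

/-- HOCRWL derivation trees for statements `e ⇒ t`, with rules
(B), (RR), (DC) and (OR). -/
inductive DTree (P : Program σ) : Exp σ → Exp σ → Type where
  | bot (e : Exp σ) : DTree P e Exp.bot
  | rr (x : ℕ) : DTree P (Exp.var x) (Exp.var x)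
  | dc (h : Exp σ) (es ts : List (Exp σ)) (hsym : IsSymb h)
      (hlen : es.length = ts.length) (hpat : IsPPat (applyList h ts))
      (ds : ∀ p ∈ es.zip ts, DTree P p.1 p.2) :
      DTree P (applyList h es) (applyList h ts)
  | opr (r : Rule σ) (hr : r ∈ P) (θ : ℕ → Exp σ) (hθ : PSub θ)
      (es as : List (Exp σ)) (t : Exp σ) (hlen : es.length = r.lhs.length)
      (ds : ∀ p ∈ es.zip (r.lhs.map (subst θ)), DTree P p.1 p.2)
      (d : DTree P (applyList (subst θ r.rhs) as) t) :
      DTree P (applyList (Exp.fn r.fn) (es ++ as)) t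

/-- `P ⊢ e ⇒ t` is derivable in the HOCRWL proof calculus. -/
def Deriv (P : Program σ) (e t : Exp σ) : Prop := Nonempty (DTree P e t)

/-- The HOCRWL denotation `⟦e⟧^P = { t ∈ Pat_⊥ | P ⊢ e ⇒ t }`. -/
def den (P : Program σ) (e : Exp σ) : Set (Exp σ) := {t | IsPPat t ∧ Deriv P e t}

/-- Observations: total patterns in the denotation. -/
def Obs (P : Program σ) (e : Exp σ) : Set (Exp σ) := {t | t ∈ den P e ∧ BotFree t}

/-- First-order observations: first-order patterns in the denotation. -/
def ObsFO (P : Program σ) (e : Exp σ) : Set (Exp σ) := {t | t ∈ den P e ∧ IsFOPat t}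

/-- Contexts `C ::= [ ] | C e | e C`. -/
inductive Cntxt (σ : Sig) : Type where
  | hole : Cntxt σ
  | appL : Cntxt σ → Exp σ → Cntxt σ
  | appR : Exp σ → Cntxt σ → Cntxt σ

/-- Filling the hole of a context with an expression. -/
def Cntxt.fill : Cntxt σ → Exp σ → Exp σ
  | .hole, e => e
  | .appL C e', e => .app (C.fill e) e'
  | .appR e' C, e => .app e' (C.fill e)

/-- Function symbols occurring in an expression. -/
def expFS : Exp σ → Set σ.FS
  | .fn f => {f}
  | .app a b => expFS a ∪ expFS b
  | _ => ∅

/-- Function symbols occurring in a rule. -/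
def ruleFS (r : Rule σ) : Set σ.FS :=
  insert r.fn ((⋃ t ∈ r.lhs, expFS t) ∪ expFS r.rhs)

/-- Function symbols occurring in a program. -/
def progFS (P : Program σ) : Set σ.FS := ⋃ r ∈ P, ruleFS r

/-- Function symbols defined by a program (roots of left-hand sides). -/
def defs (P : Program σ) : Set σ.FS := Rule.fn '' P

/-- `P'` is a safe extension of `(P, e)`: `P' = P ⊎ P''` where `P''` defines no
function symbol occurring in `P` or in `e`. -/
def SafeExt (P P' : Program σ) (e : Exp σ) : Prop :=
  ∃ P'' : Program σ, P' = P ∪ P'' ∧ Disjoint P P'' ∧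
    Disjoint (defs P'') (expFS e ∪ progFS P)

/-- `e ∼ₙ e'` : `n`-extensional equivalence. -/
def ExtEquiv (P : Program σ) (n : ℕ) (e e' : Exp σ) : Prop :=
  ∀ es : List (Exp σ), es.length = n →
    den P (applyList e es) = den P (applyList e' es)

/-- The `n`-extensional semantics `⟦e⟧_{ext_n} = λ t1 … λ tn. ⟦e t1 … tn⟧`,
a function on `n`-tuples of partial patterns. -/
def extSem (P : Program σ) (n : ℕ) (e : Exp σ) :
    {ts : List (Exp σ) // ts.length = n ∧ ∀ t ∈ ts, IsPPat t} → Set (Exp σ) :=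
  fun ts => den P (applyList e ts.1)

section SpineHelpers
variable {σ : Sig}

lemma applyList_append (e : Exp σ) (l l' : List (Exp σ)) :
    applyList e (l ++ l') = applyList (applyList e l) l' :=
  List.foldl_append

lemma applyList_concat (e : Exp σ) (l : List (Exp σ)) (b : Exp σ) :
    applyList e (l ++ [b]) = .app (applyList e l) b := by
  rw [applyList_append]; rfl

lemma applyList_cons (e a : Exp σ) (l : List (Exp σ)) :
    applyList e (a :: l) = applyList (.app e a) l := rfl

/-- The head of the application spine. -/
def headOf : Exp σ → Exp σ
  | .app a _ => headOf a
  | e => e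

/-- The arguments of the application spine. -/
def argsOf : Exp σ → List (Exp σ)
  | .app a b => argsOf a ++ [b]
  | _ => []

lemma headOf_app (a b : Exp σ) : headOf (.app a b) = headOf a := rfl
lemma argsOf_app (a b : Exp σ) : argsOf (.app a b) = argsOf a ++ [b] := rfl

lemma headOf_applyList (e : Exp σ) (l : List (Exp σ)) :
    headOf (applyList e l) = headOf e := by
  induction l generalizing e with
  | nil => rfl
  | cons a l ih => rw [applyList_cons, ih, headOf_app]

lemma argsOf_applyList (e : Exp σ) (l : List (Exp σ)) :
    argsOf (applyList e l) = argsOf e ++ l := by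
  induction l generalizing e with
  | nil => simp [applyList]
  | cons a l ih => rw [applyList_cons, ih, argsOf_app]; simp

lemma spine_eq : ∀ e : Exp σ, applyList (headOf e) (argsOf e) = e
  | .app a b => by rw [argsOf_app, headOf_app, applyList_concat, spine_eq a]
  | .var _ => rfl
  | .fn _ => rfl
  | .cn _ => rfl
  | .bot => rfl

lemma argsOf_symb {h : Exp σ} (hs : IsSymb h) : argsOf h = [] := by
  cases h <;> first | rfl | exact hs.elim

lemma headOf_symb {h : Exp σ} (hs : IsSymb h) : headOf h = h := by
  cases h <;> first | rfl | exact hs.elim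

/-- Decomposing an equality between a symbol-headed spine and another spine. -/
lemma decomp {h u : Exp σ} (hs : IsSymb h) {Es ws : List (Exp σ)}
    (heq : applyList h Es = applyList u ws) :
    Es = argsOf u ++ ws ∧ u = applyList h (argsOf u) := by
  have h1 := congrArg argsOf heq
  rw [argsOf_applyList, argsOf_applyList, argsOf_symb hs] at h1
  have h2 := congrArg headOf heq
  rw [headOf_applyList, headOf_applyList, headOf_symb hs] at h2
  refine ⟨by simpa using h1, ?_⟩
  conv_lhs => rw [← spine_eq u]
  rw [← h2]

lemma decomp_app {h u v : Exp σ} (hs : IsSymb h) {Es ws : List (Exp σ)}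
    (heq : applyList h Es = applyList (.app u v) ws) :
    Es = argsOf u ++ v :: ws ∧ u = applyList h (argsOf u) := by
  obtain ⟨h1, h2⟩ := decomp hs heq
  rw [argsOf_app] at h1
  refine ⟨by simpa using h1, ?_⟩
  rw [argsOf_app, applyList_concat] at h2
  injection h2 with h3 h4

lemma applyList_app_ex (u v : Exp σ) (ws : List (Exp σ)) :
    ∃ a b, applyList (.app u v) ws = .app a b := by
  rcases ws.eq_nil_or_concat with rfl | ⟨l, w, rfl⟩
  · exact ⟨u, v, rfl⟩
  · rw [List.concat_eq_append, applyList_concat]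
    exact ⟨_, _, rfl⟩

end SpineHelpers
section ListHelpers

lemma split3 {α : Type*} (L : List α) (n m : ℕ) (h : L.length = n + (m + 1)) :
    ∃ A x B, L = A ++ x :: B ∧ A.length = n ∧ B.length = m := by
  obtain ⟨x, B, hB⟩ : ∃ x B, L.drop n = x :: B := by
    cases hd : L.drop n with
    | nil => have := @List.length_drop _ n L; rw [hd] at this; simp at this; omega
    | cons x B => exact ⟨x, B, rfl⟩
  refine ⟨L.take n, x, B, ?_, ?_, ?_⟩
  · rw [← hB, List.take_append_drop]
  · simp [List.length_take]; omega
  · have := @List.length_drop _ n L; rw [hB] at this; simp at this; omega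

lemma mem_zip_same {α : Type*} : ∀ {l : List α} {p : α × α}, p ∈ l.zip l → p.1 = p.2 ∧ p.1 ∈ l := by
  intro l
  induction l with
  | nil => simp
  | cons a l ih =>
      intro p hp
      rcases List.mem_cons.1 hp with rfl | hp
      · exact ⟨rfl, by simp⟩
      · obtain ⟨h1, h2⟩ := ih hp
        exact ⟨h1, List.mem_cons_of_mem _ h2⟩

lemma zip_mid {α : Type*} : ∀ {l1 l2 l3 : List α}, l1.length = l2.length →
    ∀ {p : α × α}, p ∈ l1.zip l3 → ∃ b, (p.1, b) ∈ l1.zip l2 ∧ (b, p.2) ∈ l2.zip l3 := by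
  intro l1
  induction l1 with
  | nil => intro l2 l3 _ p hp; simp at hp
  | cons a l1 ih =>
      intro l2 l3 h12 p hp
      cases l2 with
      | nil => simp at h12
      | cons b l2 =>
          cases l3 with
          | nil => simp at hp
          | cons c l3 =>
              rcases List.mem_cons.1 hp with rfl | hp
              · exact ⟨b, by simp, by simp⟩
              · obtain ⟨b', h1, h2⟩ := ih (by simpa using h12) hp
                exact ⟨b', List.mem_cons_of_mem _ h1, List.mem_cons_of_mem _ h2⟩

end ListHelpers

section PatHelpers
variable {σ : Sig}

lemma subst_applyList (θ : ℕ → Exp σ) (e : Exp σ) (l : List (Exp σ)) :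
    subst θ (applyList e l) = applyList (subst θ e) (l.map (subst θ)) := by
  induction l generalizing e with
  | nil => rfl
  | cons a l ih => rw [applyList_cons, ih]; rfl

lemma ppat_subst {θ : ℕ → Exp σ} (hθ : PSub θ) {t : Exp σ} (ht : IsPPat t) :
    IsPPat (subst θ t) := by
  induction ht with
  | var x => exact hθ x
  | bot => exact .bot
  | capp c ts har hts ih =>
      rw [subst_applyList]
      exact .capp c (ts.map (subst θ)) (by simpa using har)
        (by rintro t' ht'; obtain ⟨t, ht, rfl⟩ := List.mem_map.1 ht'; exact ih t ht)
  | fapp f ts har hts ih =>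
      rw [subst_applyList]
      exact .fapp f (ts.map (subst θ)) (by simpa using har)
        (by rintro t' ht'; obtain ⟨t, ht, rfl⟩ := List.mem_map.1 ht'; exact ih t ht)

lemma ppat_args {h : Exp σ} (hs : IsSymb h) {Ts : List (Exp σ)}
    (hp : IsPPat (applyList h Ts)) : ∀ t ∈ Ts, IsPPat t := by
  generalize he : applyList h Ts = E at hp
  cases hp with
  | var x =>
      have := congrArg argsOf he
      rw [argsOf_applyList, argsOf_symb hs] at this
      simp [argsOf] at this
      simp [this]
  | bot =>
      have := congrArg argsOf he
      rw [argsOf_applyList, argsOf_symb hs] at this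
      simp [argsOf] at this
      simp [this]
  | capp c ts har hts =>
      obtain ⟨h1, -⟩ := decomp hs he
      rw [argsOf_symb (by trivial)] at h1
      simp at h1
      exact h1 ▸ hts
  | fapp f ts har hts =>
      obtain ⟨h1, -⟩ := decomp hs he
      rw [argsOf_symb (by trivial)] at h1
      simp at h1
      exact h1 ▸ hts

lemma ppat_fn_lt {f : σ.FS} {Ts : List (Exp σ)} (hp : IsPPat (applyList (.fn f) Ts)) :
    Ts.length < σ.arityF f := by
  generalize he : applyList (Exp.fn f) Ts = E at hp
  have hh := congrArg headOf he
  rw [headOf_applyList] at hh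
  cases hp with
  | var x => simp [headOf] at hh
  | bot => simp [headOf] at hh
  | capp c ts har hts =>
      rw [headOf_applyList] at hh
      simp [headOf] at hh
  | fapp f' ts har hts =>
      rw [headOf_applyList] at hh
      simp [headOf] at hh
      obtain ⟨h1, -⟩ := decomp (show IsSymb (Exp.fn f : Exp σ) from trivial) he
      rw [argsOf_symb (show IsSymb (Exp.fn f' : Exp σ) from trivial)] at h1
      simp at h1
      rw [h1, hh]
      exact har
end PatHelpers
section DerivHelpers
variable {σ : Sig}

lemma deriv_refl (P : Program σ) {s : Exp σ} (hs : IsPPat s) : Deriv P s s := by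
  induction hs with
  | var x => exact ⟨.rr x⟩
  | bot => exact ⟨.bot _⟩
  | capp c ts har hts ih =>
      exact ⟨.dc (.cn c) ts ts trivial rfl (.capp c ts har hts)
        (fun p hp => Classical.choice (by
          obtain ⟨h1, h2⟩ := mem_zip_same hp
          obtain ⟨a, b⟩ := p
          cases h1
          exact ih a h2))⟩
  | fapp f ts har hts ih =>
      exact ⟨.dc (.fn f) ts ts trivial rfl (.fapp f ts har hts)
        (fun p hp => Classical.choice (by
          obtain ⟨h1, h2⟩ := mem_zip_same hp
          obtain ⟨a, b⟩ := p
          cases h1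
          exact ih a h2))⟩

lemma deriv_eq_bot {P : Program σ} {c t : Exp σ} (d : DTree P c t) (hc : c = Exp.bot) :
    t = Exp.bot := by
  cases d with
  | bot => rfl
  | rr x => exact absurd hc (by simp)
  | dc h es ts hsym hlen hpat ds =>
      have h1 := congrArg argsOf hc
      rw [argsOf_applyList, argsOf_symb hsym] at h1
      simp [argsOf] at h1
      have h2 := congrArg headOf hc
      rw [headOf_applyList, headOf_symb hsym] at h2
      simp [headOf] at h2
      have h3 : ts = [] := by rw [h1] at hlen; exact (List.length_eq_zero_iff.1 hlen.symm)
      rw [h3, h2]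
      rfl
  | opr r hr θ hθ es as t hlen ds d =>
      have h2 := congrArg headOf hc
      rw [headOf_applyList] at h2
      simp [headOf] at h2

end DerivHelpers
section TransHelper
variable {σ : Sig}

lemma deriv_trans {P : Program σ} (hP : WFProg P) :
    ∀ {e s : Exp σ}, DTree P e s → IsPPat s → ∀ t, Deriv P s t → Deriv P e t := by
  intro e s d
  induction d with
  | bot e =>
      intro _ t ht
      obtain ⟨d2⟩ := ht
      rw [deriv_eq_bot d2 rfl]
      exact ⟨.bot e⟩
  | rr x => intro _ t ht; exact ht
  | dc h es ts hsym hlen hpat ds ih =>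
      intro hs t ht
      obtain ⟨d2⟩ := ht
      generalize hc : applyList h ts = c at d2
      cases d2 with
      | bot => exact ⟨.bot _⟩
      | rr x =>
          have h2 := congrArg headOf hc
          rw [headOf_applyList, headOf_symb hsym] at h2
          simp [headOf] at h2
          rw [h2] at hsym
          exact hsym.elim
      | dc h' es' ts' hsym' hlen' hpat' ds' =>
          obtain ⟨h1, -⟩ := decomp hsym hc
          rw [argsOf_symb hsym'] at h1
          simp at h1
          have h2 := congrArg headOf hc
          rw [headOf_applyList, headOf_symb hsym, headOf_applyList, headOf_symb hsym'] at h2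
          subst h2
          subst h1
          refine ⟨.dc h es ts' hsym (hlen.trans hlen') hpat' (fun p hp => Classical.choice ?_)⟩
          obtain ⟨b, hb1, hb2⟩ := zip_mid hlen hp
          have hbts : b ∈ ts := (List.of_mem_zip hb1).2
          exact ih _ hb1 (ppat_args hsym hs b hbts) p.2 ⟨ds' _ hb2⟩
      | opr r hr θ hθ es' as t' hlen' ds' d' =>
          exfalso
          obtain ⟨h1, -⟩ := decomp hsym hc
          rw [argsOf_symb (show IsSymb (Exp.fn r.fn : Exp σ) from trivial)] at h1
          simp at h1
          have h2 := congrArg headOf hc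
          rw [headOf_applyList, headOf_symb hsym, headOf_applyList,
            headOf_symb (show IsSymb (Exp.fn r.fn : Exp σ) from trivial)] at h2
          rw [h2, h1] at hs
          have hlt := ppat_fn_lt hs
          have har : r.lhs.length = σ.arityF r.fn := (hP r hr).1.1
          simp [List.length_append] at hlt
          omega
  | opr r hr θ hθ es as t0 hlen ds d ih_ds ihd =>
      intro hs t ht
      obtain ⟨d'⟩ := ihd hs t ht
      exact ⟨.opr r hr θ hθ es as t hlen ds d'⟩

end TransHelper
section DeepHelpers
variable {σ : Sig}

lemma applyList_mid (e : Exp σ) (A : List (Exp σ)) (x : Exp σ) (B : List (Exp σ)) :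
    applyList e (A ++ x :: B) = applyList (.app (applyList e A) x) B := by
  rw [show A ++ x :: B = (A ++ [x]) ++ B by simp, applyList_append, applyList_concat]

lemma zip_split {α β : Type*} {A B : List α} {T0 T1 : List β} {x : α} {tv : β}
    (h : A.length = T0.length) :
    (A ++ x :: B).zip (T0 ++ tv :: T1) = A.zip T0 ++ (x, tv) :: B.zip T1 := by
  rw [List.zip_append h]
  rfl

/-- Rebuild a (DC) inference with the distinguished argument replaced. -/
lemma dc_replace {P : Program σ} {h : Exp σ} (hsym : IsSymb h)
    {A B : List (Exp σ)} {x : Exp σ} {T0 T1 : List (Exp σ)} {tv : Exp σ}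
    (hT0 : T0.length = A.length) (hT1 : T1.length = B.length)
    (hpat : IsPPat (applyList h (T0 ++ tv :: T1)))
    (ds : ∀ p ∈ (A ++ x :: B).zip (T0 ++ tv :: T1), DTree P p.1 p.2)
    {y : Exp σ} (hy : Deriv P y tv) :
    Deriv P (applyList h (A ++ y :: B)) (applyList h (T0 ++ tv :: T1)) := by
  refine ⟨.dc h (A ++ y :: B) (T0 ++ tv :: T1) hsym (by simp [hT0, hT1])
    hpat (fun p hp => Classical.choice ?_)⟩
  rw [zip_split hT0.symm] at hp
  rcases List.mem_append.1 hp with hp | hp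
  · exact ⟨ds p (by rw [zip_split hT0.symm]; exact List.mem_append_left _ hp)⟩
  · rcases List.mem_cons.1 hp with rfl | hp
    · exact hy
    · exact ⟨ds p (by rw [zip_split hT0.symm]; exact List.mem_append_right _ (List.mem_cons_of_mem _ hp))⟩

/-- Rebuild an (OR) inference with one of the `lhs`-matching arguments replaced. -/
lemma opr_replace {P : Program σ} {r : Rule σ} (hr : r ∈ P) {θ : ℕ → Exp σ} (hθ : PSub θ)
    {A B As : List (Exp σ)} {x : Exp σ} {M0 M1 : List (Exp σ)} {m t : Exp σ}
    (hM : r.lhs.map (subst θ) = M0 ++ m :: M1)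
    (hM0 : M0.length = A.length)
    (hlen : (A ++ x :: B).length = r.lhs.length)
    (ds : ∀ p ∈ (A ++ x :: B).zip (r.lhs.map (subst θ)), DTree P p.1 p.2)
    (d : DTree P (applyList (subst θ r.rhs) As) t)
    {y : Exp σ} (hy : Deriv P y m) :
    Deriv P (applyList (Exp.fn r.fn) ((A ++ y :: B) ++ As)) t := by
  refine ⟨.opr r hr θ hθ (A ++ y :: B) As t (by simpa using hlen)
    (fun p hp => Classical.choice ?_) d⟩
  rw [hM, zip_split hM0.symm] at hp
  rcases List.mem_append.1 hp with hp | hp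
  · exact ⟨ds p (by rw [hM, zip_split hM0.symm]; exact List.mem_append_left _ hp)⟩
  · rcases List.mem_cons.1 hp with rfl | hp
    · exact hy
    · exact ⟨ds p (by rw [hM, zip_split hM0.symm]; exact List.mem_append_right _ (List.mem_cons_of_mem _ hp))⟩

/-- Factoring an argument of an application through a partial pattern. -/
lemma deep_factor {P : Program σ} (hP : WFProg P) :
    ∀ {c t : Exp σ}, DTree P c t → ∀ u v ws, c = applyList (.app u v) ws →
      ∃ s, IsPPat s ∧ Deriv P v s ∧ Deriv P (applyList (.app u s) ws) t := by
  intro c t d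
  induction d with
  | bot e => intro u v ws hc; exact ⟨.bot, .bot, ⟨.bot v⟩, ⟨.bot _⟩⟩
  | rr x =>
      intro u v ws hc
      obtain ⟨a, b, hab⟩ := applyList_app_ex u v ws
      rw [hab] at hc
      exact absurd hc (by simp)
  | dc h Es Ts hsym hlen hpat ds ih =>
      intro u v ws hc
      obtain ⟨hEs, hu⟩ := decomp_app hsym hc
      have hlen' : Ts.length = (argsOf u).length + (ws.length + 1) := by
        rw [← hlen, hEs]; simp
      obtain ⟨T0, tv, T1, hTs, hT0, hT1⟩ := split3 Ts _ _ hlen'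
      subst hEs
      subst hTs
      have htv : IsPPat tv := ppat_args hsym hpat tv (by simp)
      refine ⟨tv, htv, ⟨ds (v, tv) ?_⟩, ?_⟩
      · rw [zip_split hT0.symm]
        exact List.mem_append_right _ (List.mem_cons_self)
      · have hres := dc_replace hsym hT0 hT1 hpat ds (deriv_refl P htv)
        rwa [applyList_mid, ← hu] at hres
  | opr r hr θ hθ Es As t0 hlen ds d ih_ds ihd =>
      intro u v ws hc
      obtain ⟨hEA, hu⟩ := decomp_app (show IsSymb (Exp.fn r.fn : Exp σ) from trivial) hc
      have key : ∀ a' : List (Exp σ), argsOf u = Es ++ a' → As = a' ++ v :: ws →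
          ∃ s, IsPPat s ∧ Deriv P v s ∧ Deriv P (applyList (.app u s) ws) t0 := by
        intro a' ha1 ha2
        have hd' : applyList (subst θ r.rhs) As
            = applyList (.app (applyList (subst θ r.rhs) a') v) ws := by
          rw [ha2, applyList_mid]
        obtain ⟨s, hs1, hs2, hs3⟩ := ihd _ _ _ hd'
        refine ⟨s, hs1, hs2, ?_⟩
        obtain ⟨d3⟩ := hs3
        have hnew : Deriv P (applyList (Exp.fn r.fn) (Es ++ (a' ++ s :: ws))) t0 :=
          ⟨.opr r hr θ hθ Es (a' ++ s :: ws) t0 hlen ds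
            (by rw [applyList_mid]; exact d3)⟩
        rwa [show Es ++ (a' ++ s :: ws) = (Es ++ a') ++ s :: ws by simp,
          applyList_mid, ← ha1, ← hu] at hnew
      rcases List.append_eq_append_iff.1 hEA with ⟨a', ha1, ha2⟩ | ⟨c', hc1, hc2⟩
      · exact key a' ha1 ha2
      · cases c' with
        | nil =>
            have h1 : Es = argsOf u := by simpa using hc1
            have h2 : v :: ws = As := by simpa using hc2
            exact key [] (by simp [h1]) (by simp [← h2])
        | cons x c₂ =>
            obtain ⟨hx1, hws⟩ : x = v ∧ ws = c₂ ++ As := by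
              have := hc2
              simp at this
              exact ⟨this.1.symm, this.2⟩
            subst hx1
            have hMlen : (r.lhs.map (subst θ)).length = (argsOf u).length + (c₂.length + 1) := by
              rw [List.length_map, ← hlen, hc1]; simp
            obtain ⟨M0, m, M1, hM, hM0, hM1⟩ := split3 _ _ _ hMlen
            have hmpat : IsPPat m := by
              have hm : m ∈ r.lhs.map (subst θ) := by rw [hM]; simp
              obtain ⟨p, hp, rfl⟩ := List.mem_map.1 hm
              exact ppat_subst hθ ((hP r hr).1.2.1 p hp).1
            have ds' : ∀ p ∈ (argsOf u ++ x :: c₂).zip (r.lhs.map (subst θ)),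
                DTree P p.1 p.2 := by rw [← hc1]; exact ds
            refine ⟨m, hmpat, ⟨ds' (x, m) ?_⟩, ?_⟩
            · rw [hM, zip_split hM0.symm]
              exact List.mem_append_right _ (List.mem_cons_self)
            · have hres := opr_replace hr hθ hM hM0 (by rw [← hc1]; exact hlen)
                ds' d (deriv_refl P hmpat)
              rwa [show (argsOf u ++ m :: c₂) ++ As = argsOf u ++ m :: (c₂ ++ As) by simp,
                applyList_mid, ← hu, ← hws] at hres

end DeepHelpers
section DeepMono
variable {σ : Sig}

/-- Monotonicity: an argument may be replaced by any expression deriving the pattern. -/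
lemma deep_mono {P : Program σ} (hP : WFProg P) :
    ∀ {c t : Exp σ}, DTree P c t → ∀ u s ws, c = applyList (.app u s) ws →
      IsPPat s → ∀ v, Deriv P v s → Deriv P (applyList (.app u v) ws) t := by
  intro c t d
  induction d with
  | bot e => intro u s ws hc hps v hv; exact ⟨.bot _⟩
  | rr x =>
      intro u s ws hc hps v hv
      obtain ⟨a, b, hab⟩ := applyList_app_ex u s ws
      rw [hab] at hc
      exact absurd hc (by simp)
  | dc h Es Ts hsym hlen hpat ds ih =>
      intro u s ws hc hps v hv
      obtain ⟨hEs, hu⟩ := decomp_app hsym hc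
      have hlen' : Ts.length = (argsOf u).length + (ws.length + 1) := by
        rw [← hlen, hEs]; simp
      obtain ⟨T0, tv, T1, hTs, hT0, hT1⟩ := split3 Ts _ _ hlen'
      subst hEs
      subst hTs
      have hstv : DTree P s tv := ds (s, tv) (by
        rw [zip_split hT0.symm]
        exact List.mem_append_right _ (List.mem_cons_self))
      have hvtv : Deriv P v tv := deriv_trans hP (Classical.choice hv) hps tv ⟨hstv⟩
      have hres := dc_replace hsym hT0 hT1 hpat ds hvtv
      rwa [applyList_mid, ← hu] at hres
  | opr r hr θ hθ Es As t0 hlen ds d ih_ds ihd =>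
      intro u s ws hc hps v hv
      obtain ⟨hEA, hu⟩ := decomp_app (show IsSymb (Exp.fn r.fn : Exp σ) from trivial) hc
      have key : ∀ a' : List (Exp σ), argsOf u = Es ++ a' → As = a' ++ s :: ws →
          Deriv P (applyList (.app u v) ws) t0 := by
        intro a' ha1 ha2
        have hd' : applyList (subst θ r.rhs) As
            = applyList (.app (applyList (subst θ r.rhs) a') s) ws := by
          rw [ha2, applyList_mid]
        obtain ⟨d3⟩ := ihd _ _ _ hd' hps v hv
        have hnew : Deriv P (applyList (Exp.fn r.fn) (Es ++ (a' ++ v :: ws))) t0 :=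
          ⟨.opr r hr θ hθ Es (a' ++ v :: ws) t0 hlen ds
            (by rw [applyList_mid]; exact d3)⟩
        rwa [show Es ++ (a' ++ v :: ws) = (Es ++ a') ++ v :: ws by simp,
          applyList_mid, ← ha1, ← hu] at hnew
      rcases List.append_eq_append_iff.1 hEA with ⟨a', ha1, ha2⟩ | ⟨c', hc1, hc2⟩
      · exact key a' ha1 ha2
      · cases c' with
        | nil =>
            have h1 : Es = argsOf u := by simpa using hc1
            have h2 : s :: ws = As := by simpa using hc2
            exact key [] (by simp [h1]) (by simp [← h2])
        | cons x c₂ =>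
            obtain ⟨hx1, hws⟩ : x = s ∧ ws = c₂ ++ As := by
              have := hc2
              simp at this
              exact ⟨this.1.symm, this.2⟩
            subst hx1
            have hMlen : (r.lhs.map (subst θ)).length = (argsOf u).length + (c₂.length + 1) := by
              rw [List.length_map, ← hlen, hc1]; simp
            obtain ⟨M0, m, M1, hM, hM0, hM1⟩ := split3 _ _ _ hMlen
            have ds' : ∀ p ∈ (argsOf u ++ x :: c₂).zip (r.lhs.map (subst θ)),
                DTree P p.1 p.2 := by rw [← hc1]; exact ds
            have hsm : DTree P x m := ds' (x, m) (by
              rw [hM, zip_split hM0.symm]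
              exact List.mem_append_right _ (List.mem_cons_self))
            have hvm : Deriv P v m := deriv_trans hP (Classical.choice hv) hps m ⟨hsm⟩
            have hres := opr_replace hr hθ hM hM0 (by rw [← hc1]; exact hlen)
              ds' d hvm
            rwa [show (argsOf u ++ v :: c₂) ++ As = argsOf u ++ v :: (c₂ ++ As) by simp,
              applyList_mid, ← hu, ← hws] at hres

end DeepMono
section Final
variable {σ : Sig}

lemma deriv_to_pats {P : Program σ} (hP : WFProg P) :
    ∀ (es : List (Exp σ)) (e t : Exp σ), Deriv P (applyList e es) t →
      ∃ ts, ts.length = es.length ∧ (∀ s ∈ ts, IsPPat s) ∧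
        (∀ p ∈ es.zip ts, Deriv P p.1 p.2) ∧ Deriv P (applyList e ts) t := by
  intro es
  induction es with
  | nil => intro e t h; exact ⟨[], rfl, by simp, by simp, h⟩
  | cons a es ih =>
      intro e t h
      obtain ⟨ts', h1, h2, h3, h4⟩ := ih (.app e a) t h
      obtain ⟨d⟩ := h4
      obtain ⟨s, hs1, hs2, hs3⟩ := deep_factor hP d e a ts' rfl
      refine ⟨s :: ts', by simp [h1], ?_, ?_, hs3⟩
      · rintro x hx
        rcases List.mem_cons.1 hx with rfl | hx
        exacts [hs1, h2 x hx]
      · rintro p hp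
        rcases List.mem_cons.1 hp with rfl | hp
        exacts [hs2, h3 p hp]

lemma deriv_of_pats {P : Program σ} (hP : WFProg P) :
    ∀ (es ts : List (Exp σ)) (e t : Exp σ), ts.length = es.length →
      (∀ s ∈ ts, IsPPat s) → (∀ p ∈ es.zip ts, Deriv P p.1 p.2) →
      Deriv P (applyList e ts) t → Deriv P (applyList e es) t := by
  intro es
  induction es with
  | nil =>
      intro ts e t hl _ _ h
      have : ts = [] := List.length_eq_zero_iff.1 (by simpa using hl)
      rw [this] at h
      exact h
  | cons a es ih =>
      intro ts e t hl hp hd h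
      obtain ⟨s, ts', rfl⟩ : ∃ s ts', ts = s :: ts' := by
        cases ts with
        | nil => simp at hl
        | cons s ts' => exact ⟨s, ts', rfl⟩
      obtain ⟨d⟩ := h
      have h' : Deriv P (applyList (.app e a) ts') t :=
        deep_mono hP d e s ts' rfl (hp s (by simp)) a (hd (a, s) (by simp))
      exact ih ts' (.app e a) t (by simpa using hl)
        (fun x hx => hp x (List.mem_cons_of_mem _ hx))
        (fun p hq => hd p (List.mem_cons_of_mem _ hq)) h'

lemma den_applyList {P : Program σ} (hP : WFProg P) (e : Exp σ) (es : List (Exp σ)) (t : Exp σ) :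
    Deriv P (applyList e es) t ↔ ∃ ts, ts.length = es.length ∧ (∀ s ∈ ts, IsPPat s) ∧
      (∀ p ∈ es.zip ts, Deriv P p.1 p.2) ∧ Deriv P (applyList e ts) t :=
  ⟨fun h => deriv_to_pats hP es e t h,
   fun ⟨ts, h1, h2, h3, h4⟩ => deriv_of_pats hP es ts e t h1 h2 h3 h4⟩

end Final
/-- **Proposition 1(iii)**: `e ∼ₙ e'` iff `⟦e⟧_{ext_n} = ⟦e'⟧_{ext_n}`. -/
theorem extEquiv_iff_extSem (σ : Sig) (P : Program σ) (hP : WFProg P)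
    (e e' : Exp σ) (n : ℕ) :
    ExtEquiv P n e e' ↔ extSem P n e = extSem P n e' := by
  constructor
  · intro h
    funext tsub
    obtain ⟨ts, hlen, hpat⟩ := tsub
    exact h ts hlen
  · intro h es hes
    ext t
    simp only [den, Set.mem_setOf_eq]
    constructor <;> rintro ⟨h1, h2⟩ <;> refine ⟨h1, ?_⟩ <;>
      rw [den_applyList hP] at h2 ⊢ <;> obtain ⟨ts, g1, g2, g3, g4⟩ := h2 <;>
      refine ⟨ts, g1, g2, g3, ?_⟩
    · have hc := congrFun h ⟨ts, by rw [g1, hes], g2⟩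
      simp only [extSem] at hc
      have ht : t ∈ den P (applyList e ts) := ⟨h1, g4⟩
      rw [hc] at ht
      exact ht.2
    · have hc := congrFun h ⟨ts, by rw [g1, hes], g2⟩
      simp only [extSem] at hc
      have ht : t ∈ den P (applyList e' ts) := ⟨h1, g4⟩
      rw [← hc] at ht
      exact ht.2
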